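/- Let Λ be the upper triangular algebra (A, A/rad(A); 0, B) with B = T(A/rad(A)), and e' = diag(0,1). Then there is a short exact sequence of right Λ-modules 0 → (0, A/rad(A), 0) → e'Λ → (0, A/rad(A), 0) → 0, where (0, A/rad(A), 0) denotes the Λ-module supported at the B-component. In particular, the top of e'Λ has delooping level 0. -/

import Mathlib

open CategoryTheory MulOpposite

universe u

/-- `f : P →ₗ[R] X` is a projective cover: `P` is projective, `f` is surjective, and the
kernel of `f` is superfluous in `P`. -/
def IsProjCover (R : Type u) [Ring R] {P X : Type u} [AddCommGroup P] [Module R P]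
    [AddCommGroup X] [Module R X] (f : P →ₗ[R] X) : Prop :=
  Module.Projective R P ∧ Function.Surjective f ∧
    ∀ N : Submodule R P, N ⊔ LinearMap.ker f = ⊤ → N = ⊤

/-- `IsSyzygy R n X K` means that `K` is an `n`-th syzygy `Ω^n(X)` of `X`, obtained by
iteratively taking kernels of projective covers. -/
inductive IsSyzygy (R : Type u) [Ring R] : ℕ → ModuleCat.{u} R → ModuleCat.{u} R → Prop
  | zero (X : ModuleCat.{u} R) : IsSyzygy R 0 X X
  | succ {n : ℕ} {X K P : ModuleCat.{u} R} (f : P ⟶ X) (hf : IsProjCover R f.hom)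
      (h : IsSyzygy R n (ModuleCat.of R (LinearMap.ker f.hom)) K) : IsSyzygy R (n + 1) X K

/-- `X` is a direct summand of `Y`. -/
def IsDirectSummandOf (R : Type u) [Ring R] (X Y : Type u) [AddCommGroup X] [Module R X]
    [AddCommGroup Y] [Module R Y] : Prop :=
  ∃ (i : X →ₗ[R] Y) (r : Y →ₗ[R] X), r ∘ₗ i = LinearMap.id

/-- The delooping level of a module `X`: the least `d` such that `Ω^d(X)` is a direct
summand of `P ⊕ Ω^{d+1}(M)` for some finitely generated projective module `P` and some
finitely generated module `M`; it is `⊤` (i.e. `∞`) if no such `d` exists. -/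
noncomputable def delLevel (R : Type u) [Ring R] (X : ModuleCat.{u} R) : ℕ∞ :=
  sInf {e : ℕ∞ | ∃ d : ℕ, e = (d : ℕ∞) ∧
    ∃ M P S T : ModuleCat.{u} R, Module.Finite R M ∧ Module.Projective R P ∧
      Module.Finite R P ∧ IsSyzygy R d X S ∧ IsSyzygy R (d + 1) M T ∧
      IsDirectSummandOf R S (P × T)}

/-- The delooping level of a ring `R`, computed with left `R`-modules: the supremum
(= maximum, for an Artin algebra) of the delooping levels of the simple modules. -/
noncomputable def delAlg (R : Type u) [Ring R] : ℕ∞ :=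
  ⨆ (S : ModuleCat.{u} R) (_ : IsSimpleModule R S), delLevel R S

/-- The delooping level of a ring `R` computed with right `R`-modules
(= left `Rᵐᵒᵖ`-modules), as in the paper. -/
noncomputable def delAlgRight (R : Type u) [Ring R] : ℕ∞ := delAlg Rᵐᵒᵖ

/-- A ring is an Artin algebra if it is a module-finite algebra over some commutative
artinian ring. -/
def IsArtinAlgebra (A : Type u) [Ring A] : Prop :=
  ∃ (k : Type u) (_ : CommRing k) (_ : IsArtinianRing k) (_ : Algebra k A),
    Module.Finite k A

/-- The radical of a module: the intersection of its maximal submodules. -/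
def modRad (R : Type u) [Ring R] (N : Type u) [AddCommGroup N] [Module R N] :
    Submodule R N := sInf {P : Submodule R N | IsCoatom P}

/-- `Z` belongs to `add N`: `Z` is a direct summand of a finite direct sum of copies
of `N`. -/
def InAdd (R : Type u) [Ring R] (N Z : Type u) [AddCommGroup N] [Module R N]
    [AddCommGroup Z] [Module R Z] : Prop :=
  ∃ n : ℕ, IsDirectSummandOf R Z (Fin n → N)

section Constructions

/-- The Jacobson radical of `A` as a two-sided ideal. -/
noncomputable def radT (A : Type u) [Ring A] : TwoSidedIdeal A :=
  (⊥ : TwoSidedIdeal A).jacobson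

/-- The semisimple quotient `A/rad(A)`. -/
def Sq (A : Type u) [Ring A] : Type u := (radT A).ringCon.Quotient

noncomputable instance (A : Type u) [Ring A] : Ring (Sq A) :=
  inferInstanceAs (Ring (radT A).ringCon.Quotient)

/-- The natural projection `A → A/rad(A)`. -/
noncomputable def sqMk (A : Type u) [Ring A] : A →+* Sq A := RingCon.mk' _

/-- `B = T(A/rad(A))`, the trivial extension of the semisimple quotient of `A`. -/
def BB (A : Type u) [Ring A] : Type u := TrivSqZeroExt (Sq A) (Sq A)

noncomputable instance (A : Type u) [Ring A] : Ring (BB A) :=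
  inferInstanceAs (Ring (TrivSqZeroExt (Sq A) (Sq A)))

/-- The projection `B = T(A/rad(A)) → A/rad(A)`, a ring homomorphism. -/
noncomputable def bbFst (A : Type u) [Ring A] : BB A →+* Sq A where
  toFun := TrivSqZeroExt.fst
  map_one' := TrivSqZeroExt.fst_one (R := Sq A) (M := Sq A)
  map_mul' x y := TrivSqZeroExt.fst_mul x y
  map_zero' := TrivSqZeroExt.fst_zero (R := Sq A) (M := Sq A)
  map_add' x y := TrivSqZeroExt.fst_add x y

/-! ### The `A`-`B`-bimodule `M = A/rad(A)` and the upper triangular algebra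
`Λ = (A, A/rad(A); 0, B)` -/

/-- `M = A/rad(A)` viewed as an `A`-`B`-bimodule (left action of `A` via `A → A/rad(A)`,
right action of `B` via `B → A/rad(A)`). -/
def MM (A : Type u) [Ring A] : Type u := Sq A

noncomputable instance (A : Type u) [Ring A] : AddCommGroup (MM A) :=
  inferInstanceAs (AddCommGroup (Sq A))

/-- Left action of `A × B` on `M` through the `A`-component. -/
noncomputable instance (A : Type u) [Ring A] : Module (A × BB A) (MM A) :=
  Module.compHom (Sq A) ((sqMk A).comp (RingHom.fst A (BB A)))

/-- Right action of `A × B` on `M` through the `B`-component. -/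
noncomputable instance (A : Type u) [Ring A] : Module (A × BB A)ᵐᵒᵖ (MM A) :=
  Module.compHom (Sq A) (RingHom.op ((bbFst A).comp (RingHom.snd A (BB A))))

noncomputable instance (A : Type u) [Ring A] :
    SMulCommClass (A × BB A) (A × BB A)ᵐᵒᵖ (MM A) :=
  ⟨fun c c' m => by
    show sqMk A c.1 * ((show Sq A from m) * bbFst A (unop c').2) =
      (sqMk A c.1 * (show Sq A from m)) * bbFst A (unop c').2
    exact (mul_assoc _ _ _).symm⟩

/-- The upper triangular matrix algebra `Λ = (A, A/rad(A); 0, B)`, realized as the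
trivial square-zero extension of `A × B` by the bimodule `M = A/rad(A)`. -/
def Lam (A : Type u) [Ring A] : Type u := TrivSqZeroExt (A × BB A) (MM A)

noncomputable instance (A : Type u) [Ring A] : Ring (Lam A) :=
  inferInstanceAs (Ring (TrivSqZeroExt (A × BB A) (MM A)))

/-! ### The `B`-`A`-bimodule `M' = A/rad(A)` and the cover
`Ã = (A, 0; A/rad(A), B)` -/

/-- `M' = A/rad(A)` viewed as a `B`-`A`-bimodule. -/
def MC (A : Type u) [Ring A] : Type u := Sq A

noncomputable instance (A : Type u) [Ring A] : AddCommGroup (MC A) :=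
  inferInstanceAs (AddCommGroup (Sq A))

/-- Left action of `A × B` on `M'` through the `B`-component. -/
noncomputable instance (A : Type u) [Ring A] : Module (A × BB A) (MC A) :=
  Module.compHom (Sq A) ((bbFst A).comp (RingHom.snd A (BB A)))

/-- Right action of `A × B` on `M'` through the `A`-component. -/
noncomputable instance (A : Type u) [Ring A] : Module (A × BB A)ᵐᵒᵖ (MC A) :=
  Module.compHom (Sq A) (RingHom.op ((sqMk A).comp (RingHom.fst A (BB A))))

noncomputable instance (A : Type u) [Ring A] :
    SMulCommClass (A × BB A) (A × BB A)ᵐᵒᵖ (MC A) :=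
  ⟨fun c c' m => by
    show bbFst A c.2 * ((show Sq A from m) * sqMk A (unop c').1) =
      (bbFst A c.2 * (show Sq A from m)) * sqMk A (unop c').1
    exact (mul_assoc _ _ _).symm⟩

/-- The cover `Ã = (A, 0; A/rad(A), B)` of `A`: the lower triangular matrix algebra,
realized as the trivial square-zero extension of `A × B` by the `B`-`A`-bimodule
`M' = A/rad(A)`. -/
def Cov (A : Type u) [Ring A] : Type u := TrivSqZeroExt (A × BB A) (MC A)

noncomputable instance (A : Type u) [Ring A] : Ring (Cov A) :=
  inferInstanceAs (Ring (TrivSqZeroExt (A × BB A) (MC A)))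

/-- The projection `Λ → A × B`. -/
noncomputable def lamFst (A : Type u) [Ring A] : Lam A →+* A × BB A where
  toFun := TrivSqZeroExt.fst
  map_one' := TrivSqZeroExt.fst_one (R := A × BB A) (M := MM A)
  map_mul' x y := TrivSqZeroExt.fst_mul x y
  map_zero' := TrivSqZeroExt.fst_zero (R := A × BB A) (M := MM A)
  map_add' x y := TrivSqZeroExt.fst_add x y

end Constructions

section S6
variable (A : Type u) [Ring A]

/-- The projection `Λ → B`. -/
noncomputable def lamToB : Lam A →+* BB A := (RingHom.snd A (BB A)).comp (lamFst A)

/-- The right `Λ`-module `(0, A/rad(A), 0)`: the module `A/rad(A)`, with `Λ` acting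
through `Λ → B → A/rad(A)`. -/
def NSq : Type u := Sq A

noncomputable instance : AddCommGroup (NSq A) := inferInstanceAs (AddCommGroup (Sq A))

noncomputable instance : Module (Lam A)ᵐᵒᵖ (NSq A) :=
  Module.compHom (Sq A) (RingHom.op ((bbFst A).comp (lamToB A)))

/-- The idempotent `e' = diag(0,1)` of `Λ`. -/
noncomputable def lamE' : Lam A := TrivSqZeroExt.inl ((0 : A), (1 : BB A))

/-- The right ideal `e'Λ`, as a right submodule of `Λ`. -/
noncomputable def lamE'Ideal : Submodule (Lam A)ᵐᵒᵖ (Lam A) :=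
  Submodule.span (Lam A)ᵐᵒᵖ {lamE' A}

/-- The radical `(e'Λ)·rad(Λ)` of the right `Λ`-module `e'Λ`. -/
noncomputable def lamE'Rad : Submodule (Lam A)ᵐᵒᵖ (lamE'Ideal A) :=
  Submodule.span (Lam A)ᵐᵒᵖ
    {z : lamE'Ideal A | ∃ (v : lamE'Ideal A) (l : Lam A),
      l ∈ (⊥ : TwoSidedIdeal (Lam A)).jacobson ∧ z = op l • v}

end S6


/-! ### Auxiliary development for the proof of `stmt_6`. -/

section Stmt6Aux

variable (A : Type u) [Ring A]

/-- The composite projection `Λ → B → A/rad(A)`. -/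
noncomputable def phi6 : Lam A →+* Sq A := (bbFst A).comp (lamToB A)

/-- `inr` into `B`. -/
noncomputable def binr (s : Sq A) : BB A := TrivSqZeroExt.inr s

/-- `inl` into `B`. -/
noncomputable def binl (s : Sq A) : BB A := TrivSqZeroExt.inl s

/-- `fst` out of `B`. -/
noncomputable def bfst (b : BB A) : Sq A := TrivSqZeroExt.fst b

/-- `snd` out of `B`. -/
noncomputable def bsnd (b : BB A) : Sq A := TrivSqZeroExt.snd b

lemma bfst_binr (s : Sq A) : bfst A (binr A s) = 0 := rfl
lemma bsnd_binr (s : Sq A) : bsnd A (binr A s) = s := rfl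
lemma bfst_binl (s : Sq A) : bfst A (binl A s) = s := rfl
lemma binr_zero : binr A 0 = 0 := rfl
lemma bfst_eq (b : BB A) : bbFst A b = bfst A b := rfl

lemma bext (b b' : BB A) (h1 : bfst A b = bfst A b') (h2 : bsnd A b = bsnd A b') :
    b = b' := TrivSqZeroExt.ext h1 h2

lemma binr_add (s t : Sq A) : binr A (s + t) = binr A s + binr A t :=
  TrivSqZeroExt.inr_add _ s t

lemma bfst_mul (b b' : BB A) : bfst A (b * b') = bfst A b * bfst A b' := rfl

lemma bsnd_mul (b b' : BB A) :
    bsnd A (b * b') = bfst A b * bsnd A b' + bsnd A b * bfst A b' := rfl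

lemma binr_mul (s : Sq A) (b : BB A) : binr A s * b = binr A (s * bfst A b) := by
  refine bext A _ _ ?_ ?_
  · rw [bfst_mul, bfst_binr, zero_mul, bfst_binr]
  · rw [bsnd_mul, bfst_binr, zero_mul, zero_add, bsnd_binr, bsnd_binr]

lemma binr_mul_binr (s t : Sq A) : binr A s * binr A t = 0 := by
  rw [binr_mul, bfst_binr, mul_zero, binr_zero]

/-- The embedding of `B` into `Λ` along the bottom-right corner. -/
noncomputable def emb6 (b : BB A) : Lam A := TrivSqZeroExt.inl ((0 : A), b)

lemma lamToB_emb6 (b : BB A) : lamToB A (emb6 A b) = b := rfl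

lemma phi6_emb6 (b : BB A) : phi6 A (emb6 A b) = bfst A b := rfl

lemma emb6_zero : emb6 A 0 = 0 := rfl

lemma emb6_inj (b b' : BB A) (h : emb6 A b = emb6 A b') : b = b' :=
  congrArg (fun l : Lam A => l.fst.2) h

lemma emb6_add (b b' : BB A) : emb6 A (b + b') = emb6 A b + emb6 A b' := by
  refine TrivSqZeroExt.ext ?_ ?_
  · 
    show ((0 : A), b + b') = ((0 : A), b) + ((0 : A), b')
    rw [Prod.mk_add_mk, add_zero]
  · 
    show (0 : MM A) = 0 + 0
    rw [add_zero]

lemma emb6_sub (b b' : BB A) : emb6 A (b - b') = emb6 A b - emb6 A b' := by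
  refine TrivSqZeroExt.ext ?_ ?_
  · 
    show ((0 : A), b - b') = ((0 : A), b) - ((0 : A), b')
    rw [Prod.mk_sub_mk, sub_zero]
  · 
    show (0 : MM A) = 0 - 0
    rw [sub_zero]

lemma emb6_mul (b : BB A) (l : Lam A) : emb6 A b * l = emb6 A (b * lamToB A l) := by
  refine TrivSqZeroExt.ext ?_ ?_
  · 
    show ((0 : A), b) * l.fst = ((0 : A), b * lamToB A l)
    refine Prod.ext ?_ ?_
    · rw [Prod.fst_mul]; exact zero_mul _
    · rw [Prod.snd_mul]; rfl
  · 
    show ((0 : A), b) • l.snd + op l.fst • (0 : MM A) = (0 : MM A)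
    rw [smul_zero, add_zero]
    show sqMk A (0 : A) * (show Sq A from l.snd) = (0 : Sq A)
    rw [map_zero, zero_mul]

lemma lamE'_eq : lamE' A = emb6 A 1 := rfl

lemma lamE'_mul (l : Lam A) : lamE' A * l = emb6 A (lamToB A l) := by
  rw [lamE'_eq, emb6_mul, one_mul]

lemma mem_lamE'Ideal_iff (z : Lam A) : z ∈ lamE'Ideal A ↔ ∃ b : BB A, z = emb6 A b := by
  constructor
  · intro hz
    obtain ⟨c, hc⟩ := Submodule.mem_span_singleton.mp hz
    exact ⟨lamToB A (unop c), by rw [← hc, smul_eq_mul_unop, lamE'_mul]⟩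
  · rintro ⟨b, rfl⟩
    exact Submodule.mem_span_singleton.mpr
      ⟨op (emb6 A b), by rw [smul_eq_mul_unop, unop_op, lamE'_mul, lamToB_emb6]⟩

lemma NSq_smul (c : (Lam A)ᵐᵒᵖ) (x : NSq A) :
    c • x = (show Sq A from x) * phi6 A (unop c) := rfl

/-- Elements `x` with `x y x = 0` for all `y` lie in the Jacobson radical. -/
lemma mem_jacobson_bot_of_sq {R : Type u} [Ring R] (x : R) (h : ∀ y, x * y * x = 0) :
    x ∈ (⊥ : TwoSidedIdeal R).jacobson := by
  rw [TwoSidedIdeal.mem_jacobson_iff]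
  intro y
  refine ⟨1 - y * x, ?_⟩
  rw [TwoSidedIdeal.mem_bot]
  have h2 : y * (x * y * x) = 0 := by rw [h, mul_zero]
  have h3 : (1 - y * x) * y * x + (1 - y * x) - 1 = -(y * (x * y * x)) := by noncomm_ring
  rw [h3, h2, neg_zero]

lemma sqMk_surj : Function.Surjective (sqMk A) :=
  fun x => Quot.inductionOn x fun a => ⟨a, rfl⟩

lemma sqMk_eq_zero_iff (a : A) : sqMk A a = 0 ↔ a ∈ radT A := by
  rw [show (0 : Sq A) = sqMk A 0 from (map_zero _).symm]
  exact (RingCon.eq _).trans (by rw [TwoSidedIdeal.rel_iff, sub_zero])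

/-- The Jacobson radical of `A/rad(A)` is zero. -/
lemma radSq_eq_zero (x : Sq A) (hx : x ∈ (⊥ : TwoSidedIdeal (Sq A)).jacobson) : x = 0 := by
  obtain ⟨a, rfl⟩ := sqMk_surj A x
  rw [sqMk_eq_zero_iff]
  show a ∈ (⊥ : TwoSidedIdeal A).jacobson
  rw [TwoSidedIdeal.mem_jacobson_iff] at hx ⊢
  intro y
  obtain ⟨z', hz'⟩ := hx (sqMk A y)
  rw [TwoSidedIdeal.mem_bot] at hz'
  obtain ⟨c, rfl⟩ := sqMk_surj A z'
  have hj : c * y * a + c - 1 ∈ radT A := by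
    rw [← sqMk_eq_zero_iff]
    rw [map_sub, map_add, map_mul, map_mul, map_one]
    exact hz'
  obtain ⟨w, hw⟩ := (TwoSidedIdeal.mem_jacobson_iff.mp hj) 1
  rw [TwoSidedIdeal.mem_bot] at hw
  refine ⟨w * c, ?_⟩
  rw [TwoSidedIdeal.mem_bot]
  have h4 : w * c * y * a + w * c - 1 = w * 1 * (c * y * a + c - 1) + w - 1 := by noncomm_ring
  rw [h4, hw]

/-- `φ` kills the Jacobson radical of `Λ`. -/
lemma phi6_rad (l : Lam A) (hl : l ∈ (⊥ : TwoSidedIdeal (Lam A)).jacobson) :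
    phi6 A l = 0 := by
  apply radSq_eq_zero
  rw [TwoSidedIdeal.mem_jacobson_iff] at hl ⊢
  intro y'
  obtain ⟨y, hy⟩ : ∃ y : Lam A, phi6 A y = y' :=
    ⟨emb6 A (binl A y'), by rw [phi6_emb6, bfst_binl]⟩
  obtain ⟨z, hz⟩ := hl y
  rw [TwoSidedIdeal.mem_bot] at hz
  refine ⟨phi6 A z, ?_⟩
  rw [TwoSidedIdeal.mem_bot]
  have := congrArg (phi6 A) hz
  rw [map_zero, map_sub, map_add, map_mul, map_mul, map_one, hy] at this
  exact this

/-- The generator `e'` as an element of `e'Λ`. -/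
noncomputable def Eel : lamE'Ideal A := ⟨lamE' A, Submodule.mem_span_singleton_self _⟩

/-- The inclusion `(0, A/rad(A), 0) → e'Λ`. -/
noncomputable def iota6 : NSq A →ₗ[(Lam A)ᵐᵒᵖ] lamE'Ideal A where
  toFun s := ⟨emb6 A (binr A s), (mem_lamE'Ideal_iff A _).mpr ⟨_, rfl⟩⟩
  map_add' s t := Subtype.ext (by
    show emb6 A (binr A (s + t)) = emb6 A (binr A s) + emb6 A (binr A t)
    exact (congrArg (emb6 A) (binr_add A s t)).trans (emb6_add A _ _))
  map_smul' c s := Subtype.ext (by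
    show emb6 A (binr A (c • s)) = emb6 A (binr A s) * unop c
    rw [emb6_mul]
    exact congrArg (emb6 A) ((congrArg (binr A) (NSq_smul A c s)).trans (binr_mul A s _).symm))

/-- The projection `e'Λ → (0, A/rad(A), 0)`. -/
noncomputable def pmap6 : lamE'Ideal A →ₗ[(Lam A)ᵐᵒᵖ] NSq A where
  toFun z := show NSq A from phi6 A (z : Lam A)
  map_add' z w := by
    show phi6 A ((z + w : lamE'Ideal A) : Lam A) = phi6 A (z : Lam A) + phi6 A (w : Lam A)
    rw [Submodule.coe_add, map_add]
  map_smul' c z := by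
    show phi6 A ((c • z : lamE'Ideal A) : Lam A) = c • (show NSq A from phi6 A (z : Lam A))
    rw [Submodule.coe_smul, smul_eq_mul_unop, map_mul, NSq_smul]

lemma iota6_inj : Function.Injective (iota6 A) := by
  intro s t h
  have h1 : emb6 A (binr A s) = emb6 A (binr A t) := congrArg Subtype.val h
  have h2 := congrArg (bsnd A) (emb6_inj A _ _ h1)
  exact h2

lemma pmap6_surj : Function.Surjective (pmap6 A) := by
  intro s
  refine ⟨⟨emb6 A (binl A s), (mem_lamE'Ideal_iff A _).mpr ⟨_, rfl⟩⟩, ?_⟩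
  show (show NSq A from phi6 A (emb6 A (binl A s))) = s
  rfl

lemma range_iota6_eq_ker : LinearMap.range (iota6 A) = LinearMap.ker (pmap6 A) := by
  ext z
  rw [LinearMap.mem_range, LinearMap.mem_ker]
  constructor
  · rintro ⟨s, rfl⟩
    show (show NSq A from phi6 A (emb6 A (binr A s))) = 0
    rfl
  · intro hz
    obtain ⟨b, hb⟩ := (mem_lamE'Ideal_iff A (z : Lam A)).mp z.2
    have hfst : bfst A b = 0 := by
      have : phi6 A (z : Lam A) = 0 := hz
      rw [hb, phi6_emb6] at this
      exact this
    refine ⟨show NSq A from bsnd A b, Subtype.ext ?_⟩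
    show emb6 A (binr A (bsnd A b)) = (z : Lam A)
    rw [hb]
    congr 1
    exact bext A _ _ (by rw [bfst_binr, hfst]) (bsnd_binr A _)

/-- The radical of `e'Λ` is the image of `ι`. -/
lemma lamE'Rad_eq_range : lamE'Rad A = LinearMap.range (iota6 A) := by
  apply le_antisymm
  · rw [lamE'Rad, Submodule.span_le]
    rintro z ⟨v, l, hl, rfl⟩
    obtain ⟨b, hb⟩ := (mem_lamE'Ideal_iff A (v : Lam A)).mp v.2
    have hval : ((op l • v : lamE'Ideal A) : Lam A) = emb6 A (b * lamToB A l) := by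
      rw [Submodule.coe_smul, smul_eq_mul_unop, unop_op, hb, emb6_mul]
    have hfst : bfst A (b * lamToB A l) = 0 := by
      show bfst A b * bfst A (lamToB A l) = 0
      have : bfst A (lamToB A l) = 0 := phi6_rad A l hl
      rw [this, mul_zero]
    refine ⟨show NSq A from bsnd A (b * lamToB A l), Subtype.ext ?_⟩
    show emb6 A (binr A (bsnd A (b * lamToB A l))) = _
    rw [hval]
    congr 1
    exact bext A _ _ (by rw [bfst_binr, hfst]) (bsnd_binr A _)
  · rintro z ⟨s, rfl⟩
    apply Submodule.subset_span
    have hrad : emb6 A (binr A s) ∈ (⊥ : TwoSidedIdeal (Lam A)).jacobson := by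
      apply mem_jacobson_bot_of_sq
      intro y
      have key : ∀ s' : Sq A, emb6 A (binr A s') * y * emb6 A (binr A s') = 0 := fun s' => by
        rw [emb6_mul, emb6_mul, lamToB_emb6, binr_mul, binr_mul, bfst_binr,
          mul_zero, binr_zero, emb6_zero]
      exact key s
    refine ⟨Eel A, emb6 A (binr A s), hrad, Subtype.ext ?_⟩
    show emb6 A (binr A s) = ((op (emb6 A (binr A s)) • Eel A : lamE'Ideal A) : Lam A)
    rw [Submodule.coe_smul, smul_eq_mul_unop, unop_op]
    show _ = lamE' A * _
    rw [lamE'_mul, lamToB_emb6]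

lemma eq_top_of_Eel_mem (N : Submodule (Lam A)ᵐᵒᵖ (lamE'Ideal A)) (h : Eel A ∈ N) :
    N = ⊤ := by
  rw [Submodule.eq_top_iff']
  intro z
  obtain ⟨b, hb⟩ := (mem_lamE'Ideal_iff A (z : Lam A)).mp z.2
  have : z = op (emb6 A b) • Eel A := by
    apply Subtype.ext
    rw [Submodule.coe_smul, smul_eq_mul_unop, unop_op]
    show (z : Lam A) = lamE' A * emb6 A b
    rw [lamE'_mul, lamToB_emb6, hb]
  rw [this]
  exact N.smul_mem _ h

/-- `op` as a linear map. -/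
noncomputable def opL6 : Lam A →ₗ[(Lam A)ᵐᵒᵖ] (Lam A)ᵐᵒᵖ where
  toFun := op
  map_add' _ _ := rfl
  map_smul' _ _ := rfl

/-- `unop` as a linear map. -/
noncomputable def unopL6 : (Lam A)ᵐᵒᵖ →ₗ[(Lam A)ᵐᵒᵖ] Lam A where
  toFun := unop
  map_add' _ _ := rfl
  map_smul' _ _ := rfl

lemma projLam6 : Module.Projective (Lam A)ᵐᵒᵖ (Lam A) :=
  Module.Projective.of_split (opL6 A) (unopL6 A) rfl

/-- The retraction `Λ → e'Λ`, `l ↦ e'l`. -/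
noncomputable def retr6 : Lam A →ₗ[(Lam A)ᵐᵒᵖ] lamE'Ideal A where
  toFun l := ⟨lamE' A * l, (mem_lamE'Ideal_iff A _).mpr ⟨lamToB A l, lamE'_mul A l⟩⟩
  map_add' x y := Subtype.ext (by
    show lamE' A * (x + y) = lamE' A * x + lamE' A * y
    rw [mul_add])
  map_smul' c l := Subtype.ext (by
    show lamE' A * (c • l) = ((c • (⟨lamE' A * l, _⟩ : lamE'Ideal A) :
      lamE'Ideal A) : Lam A)
    rw [Submodule.coe_smul, smul_eq_mul_unop, smul_eq_mul_unop, mul_assoc])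

lemma projIdeal6 : Module.Projective (Lam A)ᵐᵒᵖ (lamE'Ideal A) := by
  haveI := projLam6 A
  refine Module.Projective.of_split (lamE'Ideal A).subtype (retr6 A) ?_
  ext z
  obtain ⟨b, hb⟩ := (mem_lamE'Ideal_iff A (z : Lam A)).mp z.2
  show lamE' A * (z : Lam A) = (z : Lam A)
  rw [hb, lamE'_mul, lamToB_emb6]

end Stmt6Aux


section Stmt6Aux2

variable (A : Type u) [Ring A]

lemma ker_pmap6 : LinearMap.ker (pmap6 A) = lamE'Rad A :=
  ((lamE'Rad_eq_range A).trans (range_iota6_eq_ker A)).symm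

/-- The projective cover `e'Λ → e'Λ/rad(e'Λ)` as a morphism of `ModuleCat`. -/
noncomputable def fq6 : ModuleCat.of (Lam A)ᵐᵒᵖ (lamE'Ideal A) ⟶
    ModuleCat.of (Lam A)ᵐᵒᵖ (lamE'Ideal A ⧸ lamE'Rad A) := ModuleCat.ofHom (lamE'Rad A).mkQ

lemma ker_fq6 : LinearMap.ker (fq6 A).hom = lamE'Rad A := Submodule.ker_mkQ _

lemma isProjCover_fq6 : IsProjCover (Lam A)ᵐᵒᵖ (fq6 A).hom := by
  refine ⟨projIdeal6 A, Submodule.mkQ_surjective _, ?_⟩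
  intro N hN
  rw [ker_fq6, lamE'Rad_eq_range] at hN
  apply eq_top_of_Eel_mem
  have hE : Eel A ∈ N ⊔ LinearMap.range (iota6 A) := by rw [hN]; exact Submodule.mem_top
  obtain ⟨n, hn, r, hr, hnr⟩ := Submodule.mem_sup.mp hE
  obtain ⟨s, rfl⟩ := LinearMap.mem_range.mp hr
  have h0 : (iota6 A s : Lam A) = emb6 A (binr A s) := rfl
  have hnval : (n : Lam A) = emb6 A (1 - binr A s) := by
    have h1 := congrArg Subtype.val hnr
    rw [Submodule.coe_add] at h1
    have h2 : (n : Lam A) = lamE' A - (iota6 A s : Lam A) := eq_sub_of_add_eq h1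
    rw [h2, h0, lamE'_eq, ← emb6_sub]
  have hE' : Eel A = op (emb6 A (1 + binr A s)) • n := by
    apply Subtype.ext
    rw [Submodule.coe_smul, smul_eq_mul_unop, unop_op, hnval, emb6_mul, lamToB_emb6]
    show emb6 A 1 = emb6 A ((1 - binr A s) * (1 + binr A s))
    have h3 : (1 - binr A s) * (1 + binr A s) = 1 - binr A s * binr A s := by noncomm_ring
    rw [h3]
    exact congrArg (emb6 A) ((congrArg (fun x => 1 - x) (binr_mul_binr A s s)).trans (sub_zero 1)).symm
  rw [hE']
  exact N.smul_mem _ hn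

/-- The induced isomorphism `e'Λ/rad → A/rad(A)`. -/
noncomputable def gam6 : (lamE'Ideal A ⧸ lamE'Rad A) →ₗ[(Lam A)ᵐᵒᵖ] NSq A :=
  (lamE'Rad A).liftQ (pmap6 A) (le_of_eq (ker_pmap6 A).symm)

lemma gam6_bij : Function.Bijective (gam6 A) := by
  constructor
  · rw [← LinearMap.ker_eq_bot]
    exact Submodule.ker_liftQ_eq_bot _ _ _ (le_of_eq (ker_pmap6 A))
  · intro s
    obtain ⟨w, hw⟩ := pmap6_surj A s
    exact ⟨Submodule.Quotient.mk w, ((lamE'Rad A).liftQ_apply (pmap6 A) w).trans hw⟩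

/-- The isomorphism `A/rad(A) → Ω(e'Λ/rad)`. -/
noncomputable def delt6 : NSq A →ₗ[(Lam A)ᵐᵒᵖ] ↥(LinearMap.ker (fq6 A).hom) :=
  LinearMap.codRestrict _ (iota6 A) (fun s => by
    have h : iota6 A s ∈ lamE'Rad A := by
      rw [lamE'Rad_eq_range]; exact ⟨s, rfl⟩
    rw [ker_fq6]; exact h)

lemma delt6_bij : Function.Bijective (delt6 A) := by
  constructor
  · intro s t h
    exact iota6_inj A (congrArg Subtype.val h)
  · intro z
    have hz : z.1 ∈ LinearMap.range (iota6 A) :=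
      (le_of_eq (lamE'Rad_eq_range A)) ((le_of_eq (ker_fq6 A)) z.2)
    obtain ⟨s, hs⟩ := LinearMap.mem_range.mp hz
    exact ⟨s, Subtype.ext hs⟩

end Stmt6Aux2

/-- Let `Λ` be the upper triangular algebra `(A, A/rad(A); 0, B)` with
`B = T(A/rad(A))`, and `e' = diag(0,1)`.  There is a short exact sequence of right
`Λ`-modules `0 → (0, A/rad(A), 0) → e'Λ → (0, A/rad(A), 0) → 0`.  In particular the
top `e'Λ / (e'Λ)rad(Λ)` of `e'Λ` has delooping level `0`. -/
theorem stmt_6 (k : Type u) [CommRing k] [IsArtinianRing k]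
    (A : Type u) [Ring A] [Algebra k A] [Module.Finite k A] :
    (∃ (ι : NSq A →ₗ[(Lam A)ᵐᵒᵖ] lamE'Ideal A)
       (p : lamE'Ideal A →ₗ[(Lam A)ᵐᵒᵖ] NSq A),
        Function.Injective ι ∧ Function.Surjective p ∧
          LinearMap.range ι = LinearMap.ker p) ∧
    delLevel (Lam A)ᵐᵒᵖ
      (ModuleCat.of (Lam A)ᵐᵒᵖ (lamE'Ideal A ⧸ lamE'Rad A)) = 0 := by
  constructor
  · exact ⟨iota6 A, pmap6 A, iota6_inj A, pmap6_surj A, range_iota6_eq_ker A⟩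
  · unfold delLevel
    refine le_antisymm (sInf_le ?_) (zero_le)
    refine ⟨0, rfl, ModuleCat.of (Lam A)ᵐᵒᵖ (lamE'Ideal A ⧸ lamE'Rad A),
      ModuleCat.of (Lam A)ᵐᵒᵖ PUnit,
      ModuleCat.of (Lam A)ᵐᵒᵖ (lamE'Ideal A ⧸ lamE'Rad A),
      ModuleCat.of (Lam A)ᵐᵒᵖ (LinearMap.ker (fq6 A).hom), ?_, ?_, ?_, ?_, ?_, ?_⟩
    · haveI : Module.Finite (Lam A)ᵐᵒᵖ (lamE'Ideal A) :=
        Module.Finite.span_singleton (Lam A)ᵐᵒᵖ (lamE' A)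
      exact Module.Finite.quotient (Lam A)ᵐᵒᵖ (lamE'Rad A)
    · exact Module.Projective.of_split
        (0 : PUnit.{u+1} →ₗ[(Lam A)ᵐᵒᵖ] (Lam A)ᵐᵒᵖ) 0 (by ext x)
    · exact inferInstanceAs (Module.Finite (Lam A)ᵐᵒᵖ PUnit.{u+1})
    · exact IsSyzygy.zero _
    · exact IsSyzygy.succ (fq6 A) (isProjCover_fq6 A) (IsSyzygy.zero _)
    · refine ⟨LinearMap.prod 0
        ((LinearEquiv.ofBijective (delt6 A) (delt6_bij A)).toLinearMap ∘ₗ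
          (LinearEquiv.ofBijective (gam6 A) (gam6_bij A)).toLinearMap),
        (LinearEquiv.ofBijective (gam6 A) (gam6_bij A)).symm.toLinearMap ∘ₗ
          (LinearEquiv.ofBijective (delt6 A) (delt6_bij A)).symm.toLinearMap ∘ₗ
          LinearMap.snd _ _ _, ?_⟩
      refine LinearMap.ext fun x => ?_
      show (LinearEquiv.ofBijective (gam6 A) (gam6_bij A)).symm
          ((LinearEquiv.ofBijective (delt6 A) (delt6_bij A)).symm
            ((LinearEquiv.ofBijective (delt6 A) (delt6_bij A))
              ((LinearEquiv.ofBijective (gam6 A) (gam6_bij A)) x))) = x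
      rw [LinearEquiv.symm_apply_apply, LinearEquiv.symm_apply_apply]
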